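/- Let g(q) = ∑_{n=0}^∞ q^n a_n and f(q) = ∑_{n=1}^∞ q^n b_n be quaternionic power series with positive radii of convergence R and ρ respectively. If r > 0 satisfies ∑_{n=1}^∞ r^n ‖b_n‖ < R, then the bullet composition h = g • f, defined coefficientwise as a formal series, has radius of convergence at least r; in particular h has positive radius of convergence. -/

import Mathlib

/-- The bullet composition of formal power series over the quaternions:
`(f • w) = ∑_n w^{*n} aₙ` where `f = ∑ qⁿ aₙ`; since the constant coefficient of `w` is
required to be `0` in applications, each coefficient is a finite sum. -/
noncomputable def bulletComp (f w : PowerSeries (Quaternion ℝ)) :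
    PowerSeries (Quaternion ℝ) :=
  PowerSeries.mk fun n =>
    ∑ k ∈ Finset.range (n + 1),
      PowerSeries.coeff (R := Quaternion ℝ) n (w ^ k) * PowerSeries.coeff (R := Quaternion ℝ) k f


open PowerSeries Finset

private noncomputable def realMaj (b : ℕ → Quaternion ℝ) : PowerSeries ℝ :=
  PowerSeries.mk fun n => ‖b n‖

private lemma coeff_pow_bound (b : ℕ → Quaternion ℝ) :
    ∀ k n, ‖PowerSeries.coeff (R := Quaternion ℝ) n ((PowerSeries.mk b) ^ k)‖ ≤
      PowerSeries.coeff (R := ℝ) n ((realMaj b) ^ k) := by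
  intro k
  induction k with
  | zero =>
    intro n
    simp only [pow_zero, PowerSeries.coeff_one]
    split <;> simp
  | succ k ih =>
    intro n
    rw [pow_succ, pow_succ, PowerSeries.coeff_mul, PowerSeries.coeff_mul]
    refine (norm_sum_le _ _).trans (Finset.sum_le_sum fun p _ => ?_)
    refine (norm_mul_le _ _).trans ?_
    simp only [realMaj, PowerSeries.coeff_mk]
    exact mul_le_mul_of_nonneg_right (ih p.1) (norm_nonneg _)

private lemma coeff_pow_nonneg (b : ℕ → Quaternion ℝ) (k n : ℕ) :
    0 ≤ PowerSeries.coeff (R := ℝ) n ((realMaj b) ^ k) :=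
  le_trans (norm_nonneg _) (coeff_pow_bound b k n)

private lemma maj_summable (b : ℕ → Quaternion ℝ) (r : ℝ) (hr : 0 < r)
    (hsum : Summable (fun n : ℕ => r ^ n * ‖b n‖)) :
    ∀ k : ℕ, Summable (fun n : ℕ => r ^ n * PowerSeries.coeff (R := ℝ) n ((realMaj b) ^ k)) ∧
      ∑' n : ℕ, r ^ n * PowerSeries.coeff (R := ℝ) n ((realMaj b) ^ k)
        = (∑' n : ℕ, r ^ n * ‖b n‖) ^ k := by
  intro k
  induction k with
  | zero =>
    have he : (fun n : ℕ => r ^ n * PowerSeries.coeff (R := ℝ) n ((realMaj b) ^ 0))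
        = fun n : ℕ => if n = 0 then (1 : ℝ) else 0 := by
      funext n
      simp only [pow_zero, PowerSeries.coeff_one]
      split <;> simp_all
    constructor
    · rw [he]
      exact summable_of_ne_finset_zero (s := {0}) (by intro n hn; simp_all)
    · rw [he]; simp
  | succ k ih =>
    obtain ⟨ihs, iht⟩ := ih
    set f : ℕ → ℝ := fun n => r ^ n * PowerSeries.coeff (R := ℝ) n ((realMaj b) ^ k) with hf
    set g : ℕ → ℝ := fun n => r ^ n * ‖b n‖ with hg
    have hfn : ∀ n, 0 ≤ f n := fun n =>
      mul_nonneg (pow_nonneg hr.le n) (coeff_pow_nonneg b k n)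
    have hgn : ∀ n, 0 ≤ g n := fun n =>
      mul_nonneg (pow_nonneg hr.le n) (norm_nonneg _)
    have hfa : Summable fun n => ‖f n‖ := by
      simpa [Real.norm_eq_abs, abs_of_nonneg (hfn _)] using ihs
    have hga : Summable fun n => ‖g n‖ := by
      simpa [Real.norm_eq_abs, abs_of_nonneg (hgn _)] using hsum
    have he : (fun n : ℕ => r ^ n * PowerSeries.coeff (R := ℝ) n ((realMaj b) ^ (k + 1)))
        = fun n : ℕ => ∑ kl ∈ Finset.HasAntidiagonal.antidiagonal n, f kl.1 * g kl.2 := by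
      funext n
      rw [pow_succ, PowerSeries.coeff_mul, Finset.mul_sum]
      refine Finset.sum_congr rfl fun p hp => ?_
      have hpn : p.1 + p.2 = n := Finset.HasAntidiagonal.mem_antidiagonal.mp hp
      simp only [hf, hg, realMaj, PowerSeries.coeff_mk]
      rw [← hpn, pow_add]
      ring
    constructor
    · rw [he]
      exact (summable_norm_sum_mul_antidiagonal_of_summable_norm hfa hga).of_norm
    · rw [he, ← tsum_mul_tsum_eq_tsum_sum_antidiagonal_of_summable_norm hfa hga,
        iht, pow_succ]

set_option maxHeartbeats 1000000 in
/-- If `g = ∑ qⁿ aₙ` converges for `‖q‖ < R` and `f = ∑_{n≥1} qⁿ bₙ` converges for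
`‖q‖ < ρ`, and `r > 0` satisfies `∑ rⁿ ‖bₙ‖ < R`, then the bullet composition `h = g • f`
(defined coefficientwise) converges for `‖q‖ < r`; in particular it has positive radius
of convergence. -/
theorem stmt11 (a b : ℕ → Quaternion ℝ) (hb0 : b 0 = 0) (R ρ : ℝ) (hR : 0 < R) (hρ : 0 < ρ)
    (hg : ∀ q : Quaternion ℝ, ‖q‖ < R → Summable (fun n : ℕ => q ^ n * a n))
    (hf : ∀ q : Quaternion ℝ, ‖q‖ < ρ → Summable (fun n : ℕ => q ^ n * b n))
    (r : ℝ) (hr : 0 < r)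
    (hsum : Summable (fun n : ℕ => r ^ n * ‖b n‖))
    (hlt : ∑' n : ℕ, r ^ n * ‖b n‖ < R) :
    ∀ q : Quaternion ℝ, ‖q‖ < r →
      Summable (fun n : ℕ =>
        q ^ n * PowerSeries.coeff (R := Quaternion ℝ) n
          (bulletComp (PowerSeries.mk a) (PowerSeries.mk b))) := by
  intro q hq
  set S : ℝ := ∑' n : ℕ, r ^ n * ‖b n‖ with hS
  have hS0 : 0 ≤ S :=
    tsum_nonneg fun n => mul_nonneg (pow_nonneg hr.le n) (norm_nonneg _)
  -- summability of S^k * ‖a k‖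
  have hSa : Summable fun k : ℕ => S ^ k * ‖a k‖ := by
    have h1 : Summable fun k : ℕ => ((S : Quaternion ℝ)) ^ k * a k := by
      refine hg _ ?_
      rw [Quaternion.norm_coe, Real.norm_eq_abs, abs_of_nonneg hS0]
      exact hlt
    have h2 := h1.norm
    have : (fun k : ℕ => ‖((S : Quaternion ℝ)) ^ k * a k‖) = fun k => S ^ k * ‖a k‖ := by
      funext k
      rw [norm_mul, norm_pow, Quaternion.norm_coe, Real.norm_eq_abs, abs_of_nonneg hS0]
    rwa [this] at h2
  -- the dominating double series
  have hv0 : ∀ p : ℕ × ℕ,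
      0 ≤ (r ^ p.2 * PowerSeries.coeff (R := ℝ) p.2 ((realMaj b) ^ p.1)) * ‖a p.1‖ := fun p =>
    mul_nonneg (mul_nonneg (pow_nonneg hr.le _) (coeff_pow_nonneg b _ _)) (norm_nonneg _)
  have hvk : ∀ k : ℕ, Summable fun n : ℕ =>
      (r ^ n * PowerSeries.coeff (R := ℝ) n ((realMaj b) ^ k)) * ‖a k‖ := fun k =>
    ((maj_summable b r hr hsum k).1).mul_right ‖a k‖
  have hvt : ∀ k : ℕ, (∑' n : ℕ, (r ^ n * PowerSeries.coeff (R := ℝ) n ((realMaj b) ^ k)) * ‖a k‖)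
      = S ^ k * ‖a k‖ := fun k => by
    rw [tsum_mul_right, (maj_summable b r hr hsum k).2]
  have hvsum : Summable fun p : ℕ × ℕ =>
      (r ^ p.2 * PowerSeries.coeff (R := ℝ) p.2 ((realMaj b) ^ p.1)) * ‖a p.1‖ := by
    refine (summable_prod_of_nonneg hv0).mpr ⟨fun k => hvk k, ?_⟩
    simpa only [hvt] using hSa
  have hvswap : Summable fun p : ℕ × ℕ =>
      (r ^ p.1 * PowerSeries.coeff (R := ℝ) p.1 ((realMaj b) ^ p.2)) * ‖a p.2‖ := by
    have := hvsum.prod_symm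
    simpa [Prod.swap] using this
  have hswap := (summable_prod_of_nonneg (fun p : ℕ × ℕ => hv0 p.swap)).mp hvswap
  have hvn : ∀ n : ℕ, Summable fun k : ℕ =>
      (r ^ n * PowerSeries.coeff (R := ℝ) n ((realMaj b) ^ k)) * ‖a k‖ := fun n => hswap.1 n
  have hmaj : Summable fun n : ℕ =>
      ∑' k : ℕ, (r ^ n * PowerSeries.coeff (R := ℝ) n ((realMaj b) ^ k)) * ‖a k‖ := hswap.2
  -- comparison
  refine Summable.of_norm (hmaj.of_nonneg_of_le (fun n => norm_nonneg _) fun n => ?_)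
  have hball : ‖q‖ ≤ r := hq.le
  have hcoeff : PowerSeries.coeff (R := Quaternion ℝ) n
      (bulletComp (PowerSeries.mk a) (PowerSeries.mk b))
      = ∑ k ∈ Finset.range (n + 1),
        PowerSeries.coeff (R := Quaternion ℝ) n ((PowerSeries.mk b) ^ k) * a k := by
    simp [bulletComp, PowerSeries.coeff_mk]
  calc ‖q ^ n * PowerSeries.coeff (R := Quaternion ℝ) n
        (bulletComp (PowerSeries.mk a) (PowerSeries.mk b))‖
      ≤ ‖q‖ ^ n * ‖PowerSeries.coeff (R := Quaternion ℝ) n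
        (bulletComp (PowerSeries.mk a) (PowerSeries.mk b))‖ := by
        rw [norm_mul, norm_pow]
    _ ≤ r ^ n * ∑ k ∈ Finset.range (n + 1),
        PowerSeries.coeff (R := ℝ) n ((realMaj b) ^ k) * ‖a k‖ := by
        refine mul_le_mul (pow_le_pow_left₀ (norm_nonneg q) hball n) ?_ (norm_nonneg _)
          (pow_nonneg hr.le n)
        rw [hcoeff]
        refine (norm_sum_le _ _).trans (Finset.sum_le_sum fun k _ => ?_)
        exact (norm_mul_le _ _).trans
          (mul_le_mul_of_nonneg_right (coeff_pow_bound b k n) (norm_nonneg _))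
    _ = ∑ k ∈ Finset.range (n + 1),
        (r ^ n * PowerSeries.coeff (R := ℝ) n ((realMaj b) ^ k)) * ‖a k‖ := by
        rw [Finset.mul_sum]
        refine Finset.sum_congr rfl fun k _ => ?_
        ring
    _ ≤ ∑' k : ℕ, (r ^ n * PowerSeries.coeff (R := ℝ) n ((realMaj b) ^ k)) * ‖a k‖ :=
        Summable.sum_le_tsum _ (fun k _ => hv0 (k, n)) (hvn n)
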